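/- For any positive real q with q ≠ 1 and any positive integer n, ∑_{k=1}^{n} [k]_{q^2} [k]_q^3 q^{(5/2)(n−k)} = [(1−q^n)(1−q^{n+1})(1−q^{n+1/2}) / ((1−q)(1−q^2)(1−q^{5/2}))] · [ (1−q^n)(1−q^{n+1})/(1−q)^2 − q^n (1−q^{1/2})/(1−q^{3/2}) ] (Schlosser's q-analogue of the sum of fourth powers, case m = 4). -/
import Mathlib

theorem schlosser_aux (s : ℝ) (hs0 : 0 < s) (hs1 : s ≠ 1) (n : ℕ) :
    ∑ k ∈ Finset.Icc 1 n,
        (((s ^ k) ^ 4 - 1) / (s ^ 4 - 1)) * (((s ^ k) ^ 2 - 1) / (s ^ 2 - 1)) ^ 3 *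
          s ^ (5 * (n - k)) =
      ((1 - (s ^ n) ^ 2) * (1 - (s ^ n) ^ 2 * s ^ 2) * (1 - (s ^ n) ^ 2 * s) /
          ((1 - s ^ 2) * (1 - s ^ 4) * (1 - s ^ 5))) *
        ((1 - (s ^ n) ^ 2) * (1 - (s ^ n) ^ 2 * s ^ 2) / (1 - s ^ 2) ^ 2 -
          (s ^ n) ^ 2 * (1 - s) / (1 - s ^ 3)) := by
  have hpowne : ∀ m : ℕ, m ≠ 0 → s ^ m ≠ 1 := by
    intro m hm h
    rcases lt_trichotomy s 1 with h1 | h1 | h1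
    · exact absurd h (ne_of_lt (pow_lt_one₀ hs0.le h1 hm))
    · exact hs1 h1
    · exact absurd h.symm (ne_of_lt (one_lt_pow₀ h1 hm))
  have h2 : (1:ℝ) - s ^ 2 ≠ 0 := sub_ne_zero.mpr fun h => hpowne 2 (by norm_num) h.symm
  have h3 : (1:ℝ) - s ^ 3 ≠ 0 := sub_ne_zero.mpr fun h => hpowne 3 (by norm_num) h.symm
  have h4 : (1:ℝ) - s ^ 4 ≠ 0 := sub_ne_zero.mpr fun h => hpowne 4 (by norm_num) h.symm
  have h5 : (1:ℝ) - s ^ 5 ≠ 0 := sub_ne_zero.mpr fun h => hpowne 5 (by norm_num) h.symm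
  have h2' : s ^ 2 - 1 ≠ 0 := fun h => h2 (by linarith [sub_eq_zero.mp h])
  have h4' : s ^ 4 - 1 ≠ 0 := fun h => h4 (by linarith [sub_eq_zero.mp h])
  induction n with
  | zero => norm_num
  | succ n ih =>
    rw [Finset.sum_Icc_succ_top (by omega : 1 ≤ n + 1)]
    have hsum : ∑ k ∈ Finset.Icc 1 n,
        (((s ^ k) ^ 4 - 1) / (s ^ 4 - 1)) * (((s ^ k) ^ 2 - 1) / (s ^ 2 - 1)) ^ 3 *
          s ^ (5 * (n + 1 - k)) =
        s ^ 5 * ∑ k ∈ Finset.Icc 1 n,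
        (((s ^ k) ^ 4 - 1) / (s ^ 4 - 1)) * (((s ^ k) ^ 2 - 1) / (s ^ 2 - 1)) ^ 3 *
          s ^ (5 * (n - k)) := by
      rw [Finset.mul_sum]
      refine Finset.sum_congr rfl fun k hk => ?_
      have hk2 := (Finset.mem_Icc.mp hk).2
      have he : 5 * (n + 1 - k) = 5 + 5 * (n - k) := by omega
      rw [he, pow_add]; ring
    rw [hsum, ih]
    have hsub : n + 1 - (n + 1) = 0 := by omega
    rw [hsub]
    have hst : s ^ (n + 1) = s ^ n * s := pow_succ s n
    rw [hst]
    set t := s ^ n with ht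
    field_simp
    ring

theorem schlosser_q_sum_m4 (q : ℝ) (hq0 : 0 < q) (hq : q ≠ 1) (n : ℕ) (hn : 0 < n) :
    ∑ k ∈ Finset.Icc 1 n,
        ((q ^ (2 * k) - 1) / (q ^ 2 - 1)) * ((q ^ k - 1) / (q - 1)) ^ 3 *
          q ^ ((5 / 2 : ℝ) * ((n : ℝ) - (k : ℝ))) =
      ((1 - q ^ n) * (1 - q ^ (n + 1)) * (1 - q ^ ((n : ℝ) + 1 / 2)) /
          ((1 - q) * (1 - q ^ 2) * (1 - q ^ ((5 : ℝ) / 2)))) *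
        ((1 - q ^ n) * (1 - q ^ (n + 1)) / (1 - q) ^ 2 -
          q ^ n * (1 - q ^ ((1 : ℝ) / 2)) / (1 - q ^ ((3 : ℝ) / 2))) := by
  set s : ℝ := q ^ ((1 : ℝ) / 2) with hs_def
  have hs0 : 0 < s := Real.rpow_pos_of_pos hq0 _
  have hpow : ∀ j : ℕ, s ^ j = q ^ ((j : ℝ) / 2) := by
    intro j
    rw [hs_def, ← Real.rpow_natCast (q ^ ((1:ℝ)/2)) j, ← Real.rpow_mul hq0.le]
    ring_nf
  have hnpow : ∀ m : ℕ, q ^ m = s ^ (2 * m) := by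
    intro m
    rw [hpow (2 * m)]
    push_cast
    rw [mul_comm (2:ℝ), mul_div_assoc]
    norm_num
  have hs1 : s ≠ 1 := by
    intro h
    apply hq
    have := hnpow 1
    rw [h, one_pow, pow_one] at this
    exact this
  have hq2 : q = s ^ 2 := by simpa using hnpow 1
  have hL : ∑ k ∈ Finset.Icc 1 n,
      ((q ^ (2 * k) - 1) / (q ^ 2 - 1)) * ((q ^ k - 1) / (q - 1)) ^ 3 *
        q ^ ((5 / 2 : ℝ) * ((n : ℝ) - (k : ℝ))) =
      ∑ k ∈ Finset.Icc 1 n,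
        (((s ^ k) ^ 4 - 1) / (s ^ 4 - 1)) * (((s ^ k) ^ 2 - 1) / (s ^ 2 - 1)) ^ 3 *
          s ^ (5 * (n - k)) := by
    refine Finset.sum_congr rfl fun k hk => ?_
    have hkn := (Finset.mem_Icc.mp hk).2
    have e1 : q ^ (2 * k) = (s ^ k) ^ 4 := by
      rw [hnpow (2 * k), show 2 * (2 * k) = k * 4 by ring, pow_mul]
    have e2 : q ^ k = (s ^ k) ^ 2 := by
      rw [hnpow k, show 2 * k = k * 2 by ring, pow_mul]
    have e3 : q ^ 2 = s ^ 4 := by rw [hnpow 2]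
    have e5 : q ^ ((5 / 2 : ℝ) * ((n : ℝ) - (k : ℝ))) = s ^ (5 * (n - k)) := by
      have hc : (5 / 2 : ℝ) * ((n : ℝ) - (k : ℝ)) = ((5 * (n - k) : ℕ) : ℝ) / 2 := by
        push_cast [hkn]; ring
      rw [hc, ← hpow]
    rw [e1, e2, e3, e5, hq2]
  rw [hL, schlosser_aux s hs0 hs1 n]
  have r1 : q ^ n = (s ^ n) ^ 2 := by
    rw [hnpow n, show 2 * n = n * 2 by ring, pow_mul]
  have r2 : q ^ (n + 1) = (s ^ n) ^ 2 * s ^ 2 := by rw [pow_succ, r1, hq2]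
  have r3 : q ^ ((n : ℝ) + 1 / 2) = (s ^ n) ^ 2 * s := by
    have hc : (n : ℝ) + 1 / 2 = ((2 * n + 1 : ℕ) : ℝ) / 2 := by push_cast; ring
    rw [hc, ← hpow, pow_add, pow_one, show 2 * n = n * 2 by ring, pow_mul]
  have r4 : q ^ ((5 : ℝ) / 2) = s ^ 5 := by
    have hc : (5 : ℝ) / 2 = ((5 : ℕ) : ℝ) / 2 := by norm_num
    rw [hc, ← hpow]
  have r6 : q ^ ((3 : ℝ) / 2) = s ^ 3 := by
    have hc : (3 : ℝ) / 2 = ((3 : ℕ) : ℝ) / 2 := by norm_num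
    rw [hc, ← hpow]
  have e3 : q ^ 2 = s ^ 4 := by rw [hnpow 2]
  rw [r3, r4, r6, r2, r1, e3, hq2]
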